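/- For f ∈ F with f(a) = × and f(a−1) = ∘, and any i > 0: the set of b such that f^a_b is obtained from f by a legal move of weight i equals the set of b such that (f^a_{a−1})^{a−1}_b is obtained from f^a_{a−1} by a legal move of weight i+1. Moreover, for i = 0: the set of b giving a legal move from f of weight 0 starting at a equals the set of b giving a legal move of weight 1 from f^a_{a−1} starting at a−1, together with the additional element b = a−1. -/

import Mathlib

namespace KacComb

/-- Core-free diagrams: functions from `ℤ` to `{×, ∘}`, with `true` = `×`. -/
abbrev F : Type := ℤ → Bool

/-- `tally f b c` = number of `×`'s minus number of `∘`'s of `f` strictly between `b` and `c`. -/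
noncomputable def tally (f : F) (b c : ℤ) : ℤ :=
  (((Finset.Ioo b c).filter fun x => f x = true).card : ℤ) -
    (((Finset.Ioo b c).filter fun x => f x = false).card : ℤ)

/-- `move f a b` = `f^a_b`: replace the `×` at `a` by `∘` and the `∘` at `b` by `×`. -/
def move (f : F) (a b : ℤ) : F :=
  Function.update (Function.update f a false) b true

/-- The move `f ↦ f^a_b` (start `a`, end `b`) is legal. -/
def IsLegal (f : F) (a b : ℤ) : Prop :=
  b < a ∧ f a = true ∧ f b = false ∧ ∀ c : ℤ, b < c → c ≤ a → 0 ≤ tally f b c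

/-- `g` is obtained from `f` by a legal move with start `a` and end `b`. -/
def LegalMove (f g : F) (a b : ℤ) : Prop :=
  IsLegal f a b ∧ g = move f a b

/-- The cap diagram of `g` has a cap beginning at `b` and ending at `a`. -/
def HasCap (g : F) (b a : ℤ) : Prop :=
  b < a ∧ g b = true ∧ g a = false ∧ tally g b a = 0 ∧
    ∀ c : ℤ, b < c → c ≤ a → 0 ≤ tally g b c

/-- The cap diagram of `g` matches the weight diagram of `f`. -/
def Matches (g f : F) : Prop :=
  (∀ b a : ℤ, HasCap g b a →
      (f b = true ∧ f a = false) ∨ (f b = false ∧ f a = true)) ∧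
  ∀ x : ℤ, f x = true → ∃ b a : ℤ, HasCap g b a ∧ (x = b ∨ x = a)

/-- `P(f)`: the set of `g` whose cap diagram matches the weight diagram of `f`. -/
def Pset (f : F) : Set F := {g | Matches g f}

lemma tally_eq_sum (f : F) (b c : ℤ) :
    tally f b c = ∑ x ∈ Finset.Ioo b c, (if f x then (1:ℤ) else -1) := by
  unfold tally
  rw [Finset.sum_ite, Finset.sum_const, Finset.sum_const]
  simp [Bool.not_eq_true, sub_eq_add_neg]

lemma tally_congr (f g : F) (b c : ℤ) (h : ∀ x ∈ Finset.Ioo b c, f x = g x) :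
    tally f b c = tally g b c := by
  rw [tally_eq_sum, tally_eq_sum]
  exact Finset.sum_congr rfl fun x hx => by rw [h x hx]

lemma move_apply (f : F) (a b x : ℤ) (hx1 : x ≠ a) (hx2 : x ≠ b) :
    move f a b x = f x := by
  unfold move
  rw [Function.update_of_ne hx2, Function.update_of_ne hx1]

lemma tally_split (f : F) (b a : ℤ) (hb : b < a - 1) :
    tally f b a = tally f b (a-1) + (if f (a-1) then 1 else -1) := by
  rw [tally_eq_sum, tally_eq_sum]
  have h1 : Finset.Ioo b a = insert (a-1) (Finset.Ioo b (a-1)) := by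
    ext x; simp only [Finset.mem_Ioo, Finset.mem_insert]; omega
  rw [h1, Finset.sum_insert (by simp)]
  ring

lemma key (f : F) (a : ℤ) (hx : f a = true) (ho : f (a - 1) = false)
    (i : ℤ) (hi : 0 ≤ i) (b : ℤ) (hb : b < a - 1) :
    (IsLegal f a b ∧ tally f b a = i) ↔
    (IsLegal (move f a (a-1)) (a-1) b ∧ tally (move f a (a-1)) b (a-1) = i + 1) := by
  set g := move f a (a-1) with hg
  have htg : ∀ c : ℤ, c ≤ a - 1 → tally g b c = tally f b c := by
    intro c hc
    refine tally_congr _ _ _ _ fun x hx => ?_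
    simp only [Finset.mem_Ioo] at hx
    exact move_apply f a (a-1) x (by omega) (by omega)
  have hsplit : tally f b a = tally f b (a-1) - 1 := by
    rw [tally_split f b a hb, ho]; simp; ring
  have hga : g (a-1) = true := by
    simp [hg, move, Function.update_self]
  have hgb : g b = f b := move_apply f a (a-1) b (by omega) (by omega)
  constructor
  · rintro ⟨⟨_, _, hfb, hleg⟩, ht⟩
    refine ⟨⟨hb, hga, by rw [hgb]; exact hfb, fun c hc1 hc2 => ?_⟩, ?_⟩
    · rw [htg c hc2]; exact hleg c hc1 (by omega)
    · rw [htg (a-1) le_rfl]; omega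
  · rintro ⟨⟨_, _, hgb', hleg⟩, ht⟩
    rw [htg (a-1) le_rfl] at ht
    refine ⟨⟨by omega, hx, by rw [← hgb]; exact hgb', fun c hc1 hc2 => ?_⟩, by omega⟩
    rcases lt_or_eq_of_le hc2 with h | h
    · rw [← htg c (by omega)]; exact hleg c hc1 (by omega)
    · subst h; omega

/-- suppose `f(a) = ×` and `f(a−1) = ∘`.  For `i > 0`, the ends of legal
moves from `f` starting at `a` of weight `i` are exactly the ends of legal moves from
`f^a_{a−1}` starting at `a−1` of weight `i+1`; and for `i = 0` the ends of weight-zero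
legal moves from `f` starting at `a` are those of weight-one legal moves from
`f^a_{a−1}` starting at `a−1`, together with `a−1` itself. -/
theorem stmt6 (f : F) (hf : {x : ℤ | f x = true}.Finite) (a : ℤ)
    (hx : f a = true) (ho : f (a - 1) = false) :
    (∀ i : ℤ, 0 < i →
      {b : ℤ | IsLegal f a b ∧ tally f b a = i} =
        {b : ℤ | IsLegal (move f a (a - 1)) (a - 1) b ∧
          tally (move f a (a - 1)) b (a - 1) = i + 1}) ∧
    {b : ℤ | IsLegal f a b ∧ tally f b a = 0} =
      {b : ℤ | IsLegal (move f a (a - 1)) (a - 1) b ∧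
        tally (move f a (a - 1)) b (a - 1) = 1} ∪ {a - 1} := by
  have htriv : tally f (a-1) a = 0 := by
    unfold tally
    have : Finset.Ioo (a-1) a = ∅ := by
      ext x; simp only [Finset.mem_Ioo, Finset.notMem_empty, iff_false]; omega
    simp [this]
  constructor
  · intro i hi
    ext b
    simp only [Set.mem_setOf_eq]
    constructor
    · rintro h
      have hb : b < a - 1 := by
        rcases h with ⟨⟨hba, _, hfb, _⟩, ht⟩
        rcases lt_or_eq_of_le (show b ≤ a - 1 by omega) with h' | h'
        · exact h'
        · subst h'; omega
      exact (key f a hx ho i (le_of_lt hi) b hb).mp h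
    · rintro h
      have hb : b < a - 1 := h.1.1
      exact (key f a hx ho i (le_of_lt hi) b hb).mpr h
  · ext b
    simp only [Set.mem_setOf_eq, Set.mem_union, Set.mem_singleton_iff]
    constructor
    · rintro ⟨⟨hba, _, hfb, hleg⟩, ht⟩
      by_cases hb : b = a - 1
      · exact Or.inr hb
      · exact Or.inl ((key f a hx ho 0 le_rfl b (by omega)).mp ⟨⟨hba, hx, hfb, hleg⟩, ht⟩)
    · rintro (h | h)
      · have hb : b < a - 1 := h.1.1
        have := (key f a hx ho 0 le_rfl b hb).mpr (by simpa using h)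
        simpa using this
      · subst h
        refine ⟨⟨by omega, hx, ho, fun c hc1 hc2 => ?_⟩, htriv⟩
        have hc : c = a := by omega
        subst hc; rw [htriv]

end KacComb
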